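/- Let 0 < α < 1. The function E_α satisfies: (1) E_α(t) > 0 for every t > 0; (2) E_α is integrable on (0,∞); and (3) ∫₀^∞ E_α(t) dt = 1. -/

import Mathlib

open MeasureTheory Real Set

open Filter Topology

lemma aux_arctan (c s : ℝ) (hs : 0 < s) :
    IntegrableOn (fun u : ℝ => ((u + c) ^ 2 + s ^ 2)⁻¹) (Ioi 0) ∧
      ∫ u in Ioi (0:ℝ), ((u + c) ^ 2 + s ^ 2)⁻¹
        = s⁻¹ * (Real.pi / 2) - s⁻¹ * Real.arctan (c / s) := by
  have hderiv : ∀ u : ℝ, HasDerivAt (fun u => s⁻¹ * Real.arctan ((u + c) / s))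
      (((u + c) ^ 2 + s ^ 2)⁻¹) u := by
    intro u
    have h1 : HasDerivAt (fun u : ℝ => (u + c) / s) (1 / s) u := by
      simpa using ((hasDerivAt_id u).add_const c).div_const s
    have h2 := (Real.hasDerivAt_arctan ((u + c) / s)).comp u h1
    have h3 := h2.const_mul s⁻¹
    refine h3.congr_deriv ?_
    have hs' : s ≠ 0 := hs.ne'
    field_simp
    ring
  have htend : Tendsto (fun u : ℝ => s⁻¹ * Real.arctan ((u + c) / s)) atTop
      (𝓝 (s⁻¹ * (Real.pi / 2))) := by
    apply Tendsto.const_mul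
    apply (Real.tendsto_arctan_atTop.mono_right nhdsWithin_le_nhds).comp
    exact (tendsto_atTop_add_const_right atTop c tendsto_id).atTop_div_const hs
  have hpos : ∀ u ∈ Ioi (0:ℝ), 0 ≤ ((u + c) ^ 2 + s ^ 2)⁻¹ := fun u _ => by positivity
  have hderiv' : ∀ u ∈ Ici (0:ℝ),
      HasDerivAt (fun u => s⁻¹ * Real.arctan ((u + c) / s)) (((u + c) ^ 2 + s ^ 2)⁻¹) u :=
    fun u _ => hderiv u
  refine ⟨integrableOn_Ioi_deriv_of_nonneg' hderiv' hpos htend, ?_⟩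
  rw [integral_Ioi_of_hasDerivAt_of_nonneg' hderiv' hpos htend]
  simp

lemma aux_rint (α : ℝ) (hα0 : 0 < α) (hα1 : α < 1) :
    IntegrableOn (fun r : ℝ => r ^ (α - 1) *
        (r ^ (2 * α) + 2 * r ^ α * Real.cos (α * Real.pi) + 1)⁻¹) (Ioi 0) ∧
      ∫ r in Ioi (0:ℝ), r ^ (α - 1) *
          (r ^ (2 * α) + 2 * r ^ α * Real.cos (α * Real.pi) + 1)⁻¹
        = Real.pi / Real.sin (α * Real.pi) := by
  set c := Real.cos (α * Real.pi) with hc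
  set s := Real.sin (α * Real.pi) with hsv
  have hπ := Real.pi_pos
  have hθ1 : 0 < α * Real.pi := by positivity
  have hθ2 : α * Real.pi < Real.pi := by nlinarith
  have hs : 0 < s := Real.sin_pos_of_pos_of_lt_pi hθ1 hθ2
  have hpyth : s ^ 2 + c ^ 2 = 1 := Real.sin_sq_add_cos_sq _
  -- value of the u-integral
  have harct : Real.arctan (c / s) = Real.pi / 2 - α * Real.pi := by
    have h1 : c / s = Real.tan (Real.pi / 2 - α * Real.pi) := by
      rw [Real.tan_pi_div_two_sub, Real.tan_eq_sin_div_cos, inv_div]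
    rw [h1, Real.arctan_tan (by linarith) (by linarith)]
  have hval : ∫ u in Ioi (0:ℝ), ((u + c) ^ 2 + s ^ 2)⁻¹ = (α * Real.pi) / s := by
    rw [(aux_arctan c s hs).2, harct]
    field_simp
    ring
  -- identity for the denominator
  have hD : ∀ r : ℝ, r ∈ Ioi (0:ℝ) →
      ((r ^ α + c) ^ 2 + s ^ 2) = r ^ (2 * α) + 2 * r ^ α * c + 1 := by
    intro r hr
    have h2 : r ^ (2 * α) = (r ^ α) ^ 2 := by
      rw [two_mul, Real.rpow_add hr, sq]
    rw [h2]; nlinarith [hpyth]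
  have hiff := integrableOn_Ioi_comp_rpow_iff' (fun u : ℝ => ((u + c) ^ 2 + s ^ 2)⁻¹) hα0.ne'
  constructor
  · have h1 : IntegrableOn
        (fun x : ℝ => x ^ (α - 1) • ((x ^ α + c) ^ 2 + s ^ 2)⁻¹) (Ioi 0) :=
      hiff.mpr (aux_arctan c s hs).1
    refine (integrableOn_congr_fun (fun x hx => ?_) measurableSet_Ioi).mp h1
    rw [smul_eq_mul, hD x hx]
  · have h2 := integral_comp_rpow_Ioi (fun u : ℝ => ((u + c) ^ 2 + s ^ 2)⁻¹) hα0.ne'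
    rw [hval] at h2
    have h3 : ∫ x in Ioi (0:ℝ), (|α| * x ^ (α - 1)) • ((x ^ α + c) ^ 2 + s ^ 2)⁻¹
        = α * ∫ x in Ioi (0:ℝ), x ^ (α - 1) *
            (x ^ (2 * α) + 2 * x ^ α * c + 1)⁻¹ := by
      rw [← integral_const_mul]
      refine setIntegral_congr_fun measurableSet_Ioi (fun x hx => ?_)
      rw [smul_eq_mul, hD x hx, abs_of_pos hα0]; ring
    rw [h3] at h2
    have h5 : α * Real.pi / s = α * (Real.pi / s) := by ring
    rw [h5] at h2
    exact mul_left_cancel₀ hα0.ne' h2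
open MeasureTheory Real Set Filter Topology



/-- The kernel `E_α(t) = (sin(απ)/π) ∫₀^∞ e^(-rt) r^α/(r^(2α)+2r^α cos(απ)+1) dr`. -/
noncomputable def Ealpha (α t : ℝ) : ℝ :=
  (Real.sin (α * Real.pi) / Real.pi) *
    ∫ r in Set.Ioi (0 : ℝ),
      Real.exp (-r * t) * r ^ α /
        (r ^ (2 * α) + 2 * r ^ α * Real.cos (α * Real.pi) + 1)

/-- For `0 < α < 1`: `E_α(t) > 0` for `t > 0`, `E_α` is integrable on `(0,∞)`,
and `∫₀^∞ E_α(t) dt = 1`. -/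
theorem Ealpha_properties (α : ℝ) (hα0 : 0 < α) (hα1 : α < 1) :
    (∀ t > (0 : ℝ), 0 < Ealpha α t) ∧
      IntegrableOn (Ealpha α) (Set.Ioi 0) ∧
      ∫ t in Set.Ioi (0 : ℝ), Ealpha α t = 1 := by
  have hπ := Real.pi_pos
  have hθ1 : 0 < α * Real.pi := by positivity
  have hθ2 : α * Real.pi < Real.pi := by nlinarith
  have hs : 0 < Real.sin (α * Real.pi) := Real.sin_pos_of_pos_of_lt_pi hθ1 hθ2
  have hpyth : Real.sin (α * Real.pi) ^ 2 + Real.cos (α * Real.pi) ^ 2 = 1 :=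
    Real.sin_sq_add_cos_sq _
  have hc1 : 0 < 1 + Real.cos (α * Real.pi) := by nlinarith
  set D : ℝ → ℝ := fun r => r ^ (2 * α) + 2 * r ^ α * Real.cos (α * Real.pi) + 1 with hDdef
  have hsq : ∀ r : ℝ, r ∈ Ioi (0:ℝ) → r ^ (2 * α) = (r ^ α) ^ 2 := fun r hr => by
    rw [two_mul, Real.rpow_add hr, sq]
  have hDpos : ∀ r : ℝ, r ∈ Ioi (0:ℝ) → 0 < D r := by
    intro r hr
    have h := hsq r hr
    have : D r = (r ^ α + Real.cos (α * Real.pi)) ^ 2 + Real.sin (α * Real.pi) ^ 2 := by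
      simp only [hDdef, h]; nlinarith
    rw [this]; positivity
  have hbound : ∀ r : ℝ, r ∈ Ioi (0:ℝ) →
      r ^ α / D r ≤ (2 * (1 + Real.cos (α * Real.pi)))⁻¹ := by
    intro r hr
    have hge : 2 * (1 + Real.cos (α * Real.pi)) * r ^ α ≤ D r := by
      have h := hsq r hr
      simp only [hDdef, h]
      nlinarith [sq_nonneg (r ^ α - 1)]
    rw [← one_div, div_le_div_iff₀ (hDpos r hr) (by positivity)]
    have hra : (0:ℝ) < r ^ α := Real.rpow_pos_of_pos hr α
    nlinarith
  -- continuity on the product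
  have hcont2 : ContinuousOn (fun p : ℝ × ℝ => Real.exp (-p.1 * p.2) * p.1 ^ α / D p.1)
      ((Ioi (0:ℝ)) ×ˢ (Ioi (0:ℝ))) := by
    have hfst : ContinuousOn (fun p : ℝ × ℝ => p.1) ((Ioi (0:ℝ)) ×ˢ (Ioi (0:ℝ))) :=
      continuous_fst.continuousOn
    have h1 : ContinuousOn (fun p : ℝ × ℝ => p.1 ^ α) ((Ioi (0:ℝ)) ×ˢ (Ioi (0:ℝ))) :=
      hfst.rpow_const (fun p hp => Or.inl (ne_of_gt hp.1))
    have h2 : ContinuousOn (fun p : ℝ × ℝ => p.1 ^ (2 * α)) ((Ioi (0:ℝ)) ×ˢ (Ioi (0:ℝ))) :=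
      hfst.rpow_const (fun p hp => Or.inl (ne_of_gt hp.1))
    have hexp : Continuous (fun p : ℝ × ℝ => Real.exp (-p.1 * p.2)) :=
      Real.continuous_exp.comp (continuous_fst.neg.mul continuous_snd)
    refine ContinuousOn.div ?_ ?_ (fun p hp => (hDpos p.1 hp.1).ne')
    · exact hexp.continuousOn.mul h1
    · exact (h2.add ((continuousOn_const.mul h1).mul continuousOn_const)).add continuousOn_const
  have hcontr : ∀ t : ℝ, t ∈ Ioi (0:ℝ) →
      ContinuousOn (fun r : ℝ => Real.exp (-r * t) * r ^ α / D r) (Ioi (0:ℝ)) := by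
    intro t ht
    have h1 : ContinuousOn (fun r : ℝ => r ^ α) (Ioi (0:ℝ)) :=
      continuousOn_id.rpow_const (fun x hx => Or.inl (ne_of_gt hx))
    have h2 : ContinuousOn (fun r : ℝ => r ^ (2 * α)) (Ioi (0:ℝ)) :=
      continuousOn_id.rpow_const (fun x hx => Or.inl (ne_of_gt hx))
    have hexp : Continuous (fun r : ℝ => Real.exp (-r * t)) :=
      Real.continuous_exp.comp (continuous_neg.mul continuous_const)
    refine ContinuousOn.div ?_ ?_ (fun r hr => (hDpos r hr).ne')
    · exact hexp.continuousOn.mul h1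
    · exact (h2.add ((continuousOn_const.mul h1).mul continuousOn_const)).add continuousOn_const
  -- integrability in r for fixed t
  have hInt : ∀ t : ℝ, t ∈ Ioi (0:ℝ) →
      IntegrableOn (fun r : ℝ => Real.exp (-r * t) * r ^ α / D r) (Ioi (0:ℝ)) := by
    intro t ht
    refine Integrable.mono' ((exp_neg_integrableOn_Ioi 0 ht).const_mul
      ((2 * (1 + Real.cos (α * Real.pi)))⁻¹)) (((hcontr t ht)).aestronglyMeasurable
        measurableSet_Ioi) ?_
    filter_upwards [ae_restrict_mem measurableSet_Ioi] with r hr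
    have hra : (0:ℝ) < r ^ α := Real.rpow_pos_of_pos hr α
    have hnn : 0 ≤ Real.exp (-r * t) * r ^ α / D r :=
      div_nonneg (by positivity) (hDpos r hr).le
    rw [Real.norm_eq_abs, abs_of_nonneg hnn]
    have := hbound r hr
    have hexp : (0:ℝ) < Real.exp (-r * t) := Real.exp_pos _
    calc Real.exp (-r * t) * r ^ α / D r = Real.exp (-r * t) * (r ^ α / D r) := by ring
      _ ≤ Real.exp (-r * t) * (2 * (1 + Real.cos (α * Real.pi)))⁻¹ := by
          exact mul_le_mul_of_nonneg_left this hexp.le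
      _ = (2 * (1 + Real.cos (α * Real.pi)))⁻¹ * Real.exp (-t * r) := by
          rw [mul_comm]; congr 2; ring
  -- inner t-integral value
  have hinner : ∀ r : ℝ, r ∈ Ioi (0:ℝ) →
      (∫ t in Ioi (0:ℝ), Real.exp (-r * t) * r ^ α / D r) = r ^ (α - 1) * (D r)⁻¹ := by
    intro r hr
    have h1 : (∫ t in Ioi (0:ℝ), Real.exp (-r * t) * r ^ α / D r)
        = (∫ t in Ioi (0:ℝ), Real.exp (-r * t)) * (r ^ α / D r) := by
      rw [← integral_mul_const]
      refine setIntegral_congr_fun measurableSet_Ioi (fun t _ => by ring)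
    have h2 : (∫ t in Ioi (0:ℝ), Real.exp (-r * t)) = r⁻¹ := by
      have h3 := integral_comp_mul_left_Ioi (fun x : ℝ => Real.exp (-x)) 0 hr
      simp only [mul_zero, neg_mul] at h3 ⊢
      rw [h3, integral_exp_neg_Ioi, neg_zero, Real.exp_zero, smul_eq_mul, mul_one]
    rw [h1, h2, Real.rpow_sub hr, Real.rpow_one]
    ring
  -- the product function and Fubini
  set F : ℝ × ℝ → ℝ := fun p => Real.exp (-p.1 * p.2) * p.1 ^ α / D p.1 with hFdef
  set μ : Measure ℝ := volume.restrict (Ioi (0:ℝ)) with hμ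
  have hFmeas : AEStronglyMeasurable F (μ.prod μ) := by
    rw [hμ, Measure.prod_restrict]
    exact hcont2.aestronglyMeasurable (measurableSet_Ioi.prod measurableSet_Ioi)
  have haux := aux_rint α hα0 hα1
  have hFint : Integrable F (μ.prod μ) := by
    rw [integrable_prod_iff hFmeas]
    constructor
    · filter_upwards [ae_restrict_mem measurableSet_Ioi] with r hr
      exact ((exp_neg_integrableOn_Ioi 0 hr).mul_const (r ^ α)).div_const (D r)
    · refine (haux.1.congr ?_)
      filter_upwards [ae_restrict_mem measurableSet_Ioi] with r hr
      have hnn : ∀ t : ℝ, 0 ≤ F (r, t) := fun t =>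
        div_nonneg (mul_nonneg (Real.exp_pos _).le (Real.rpow_pos_of_pos hr α).le) (hDpos r hr).le
      have : (fun t => ‖F (r, t)‖) = fun t => F (r, t) := by
        funext t; rw [Real.norm_eq_abs, abs_of_nonneg (hnn t)]
      rw [this]
      exact (hinner r hr).symm
  -- Ealpha in terms of F
  have hE : Ealpha α = fun t => (Real.sin (α * Real.pi) / Real.pi) *
      ∫ r, F (r, t) ∂μ := by
    funext t; rfl
  refine ⟨?_, ?_, ?_⟩
  · -- positivity
    intro t ht
    rw [hE]
    show 0 < (Real.sin (α * Real.pi) / Real.pi) * ∫ r, F (r, t) ∂μ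
    have hpos : 0 < ∫ r, F (r, t) ∂μ := by
      rw [hμ]
      refine (setIntegral_pos_iff_support_of_nonneg_ae ?_ (hInt t ht)).mpr ?_
      swap
      · refine lt_of_lt_of_le ?_
          (measure_mono (s := Ioi (0:ℝ)) (fun r hr => ?_))
        · rw [Real.volume_Ioi]; exact ENNReal.zero_lt_top
        · refine ⟨?_, hr⟩
          have : 0 < F (r, t) := by
            apply div_pos _ (hDpos r hr)
            exact mul_pos (Real.exp_pos _) (Real.rpow_pos_of_pos hr α)
          exact ne_of_gt this
      · filter_upwards [ae_restrict_mem measurableSet_Ioi] with r hr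
        exact div_nonneg (mul_nonneg (Real.exp_pos _).le
          (Real.rpow_pos_of_pos hr α).le) (hDpos r hr).le
    exact mul_pos (div_pos hs hπ) hpos
  · -- integrability
    rw [hE]
    exact (hFint.integral_prod_right).const_mul _
  · -- value of the integral
    simp only [hE]
    rw [integral_const_mul]
    have hswap : ∫ t, ∫ r, F (r, t) ∂μ ∂μ = ∫ r, ∫ t, F (r, t) ∂μ ∂μ :=
      (integral_integral_swap hFint).symm
    have : (∫ t, (∫ r, F (r, t) ∂μ) ∂μ) = Real.pi / Real.sin (α * Real.pi) := by
      rw [hswap, ← haux.2]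
      refine setIntegral_congr_fun measurableSet_Ioi (fun r hr => hinner r hr)
    show Real.sin (α * Real.pi) / Real.pi * (∫ t, (∫ r, F (r, t) ∂μ) ∂μ) = 1
    rw [this]
    field_simp
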